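/- Let W be a finite nonempty set and σ : W → W × W such that the associated directed graph (with edges q → σ(q).1 and q → σ(q).2) is strongly connected. Then there exists a nondecreasing sequence (n_k)_{k∈ℕ} of natural numbers with n_k → ∞ such that for every q ∈ W, the set of coin sequences b ∈ {0,1}^ℕ with the property that for every k ∈ ℕ every state of W appears at least n_k times among the first k+1 states X_0, …, X_k of the trajectory from q driven by b, has μ-measure at least 1/2. -/

import Mathlib

open MeasureTheory

/-- The cylinder of a finite binary word `w`. -/
def cylinder (w : List Bool) : Set (ℕ → Bool) :=
  {b | ∀ i : Fin w.length, b i = w.get i}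

/-- `μ` is the uniform probability measure on `{0,1}^ℕ`: the infinite product of
fair-coin Bernoulli(1/2) measures. -/
def IsUniformBernoulli (μ : Measure (ℕ → Bool)) : Prop :=
  IsProbabilityMeasure μ ∧ ∀ w : List Bool, μ (cylinder w) = (2 : ENNReal)⁻¹ ^ w.length

/-- The trajectory from `q` driven by the coin sequence `b`: at each step move to
the first or second component of `σ` according to whether the coin is `0` (false)
or `1` (true). -/
def traj {W : Type} (σ : W → W × W) (q : W) (b : ℕ → Bool) : ℕ → W
  | 0 => q
  | i + 1 => if b i then (σ (traj σ q b i)).2 else (σ (traj σ q b i)).1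

namespace Stmt8

variable {W : Type}

/-- Run the chain along a finite word. -/
def run (σ : W → W × W) : W → List Bool → W
  | q, [] => q
  | q, c :: u => run σ (if c then (σ q).2 else (σ q).1) u

lemma run_append (σ : W → W × W) (q : W) (u v : List Bool) :
    run σ q (u ++ v) = run σ (run σ q u) v := by
  induction u generalizing q with
  | nil => simp [run]
  | cons c u ih => simp [run, ih]

lemma traj_add (σ : W → W × W) (q : W) (b : ℕ → Bool) (s : ℕ) :
    ∀ i, traj σ q b (s + i) = run σ (traj σ q b s) ((List.range i).map fun t => b (s + t))
  | 0 => by simp [run]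
  | i + 1 => by
    rw [List.range_succ, List.map_append, run_append, ← Nat.add_assoc]
    show (if b (s+i) then _ else _) = _
    rw [traj_add σ q b s i]
    by_cases h : b (s + i) <;> simp [run, h]

lemma traj_eq_run (σ : W → W × W) (q : W) (b : ℕ → Bool) (n : ℕ) :
    traj σ q b n = run σ q ((List.range n).map b) := by
  simpa [traj] using traj_add σ q b 0 n

/-- all words of a given length -/
def enum (n : ℕ) : Finset (List Bool) :=
  (Finset.univ : Finset (Fin n → Bool)).image List.ofFn

lemma card_enum (n : ℕ) : (enum n).card = 2 ^ n := by
  rw [enum, Finset.card_image_of_injective _ List.ofFn_injective]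
  simp

lemma mem_enum {n : ℕ} {u : List Bool} (h : u.length = n) : u ∈ enum n := by
  subst h
  exact Finset.mem_image.2 ⟨u.get, Finset.mem_univ _, List.ofFn_get u⟩

lemma length_of_mem_enum {n : ℕ} {u : List Bool} (h : u ∈ enum n) : u.length = n := by
  rcases Finset.mem_image.1 h with ⟨f, _, rfl⟩
  simp

/-- words of length `N` blocks, all blocks bad -/
def allBad (σ : W → W × W) (bad : W → Finset (List Bool)) : ℕ → W → Finset (List Bool)
  | 0, _ => {[]}
  | N + 1, q => (bad q).biUnion fun u => (allBad σ bad N (run σ q u)).image (u ++ ·)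

lemma card_allBad (σ : W → W × W) (bad : W → Finset (List Bool)) (c : ℕ)
    (hc : ∀ p, (bad p).card ≤ c) : ∀ N q, (allBad σ bad N q).card ≤ c ^ N
  | 0, q => by simp [allBad]
  | N + 1, q => by
    calc (allBad σ bad (N+1) q).card
        ≤ ∑ u ∈ bad q, ((allBad σ bad N (run σ q u)).image (u ++ ·)).card :=
          Finset.card_biUnion_le
      _ ≤ ∑ u ∈ bad q, c ^ N := by
          refine Finset.sum_le_sum fun u _ => ?_
          exact (Finset.card_image_le).trans (card_allBad σ bad c hc N _)
      _ = (bad q).card * c ^ N := by simp [Finset.sum_const, Nat.smul_one_eq_cast]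
      _ ≤ c * c ^ N := Nat.mul_le_mul_right _ (hc q)
      _ = c ^ (N + 1) := by ring

lemma length_allBad (σ : W → W × W) (bad : W → Finset (List Bool)) (ℓ : ℕ)
    (hl : ∀ p u, u ∈ bad p → u.length = ℓ) :
    ∀ N q v, v ∈ allBad σ bad N q → v.length = N * ℓ
  | 0, q, v => by
    intro hv
    simp [allBad] at hv
    simp [hv]
  | N + 1, q, v => by
    intro hv
    rcases Finset.mem_biUnion.1 hv with ⟨u, hu, hv⟩
    rcases Finset.mem_image.1 hv with ⟨w, hw, rfl⟩
    have := length_allBad σ bad ℓ hl N (run σ q u) w hw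
    simp only [List.length_append, this, hl _ _ hu]
    ring

lemma mem_allBad (σ : W → W × W) (bad : W → Finset (List Bool)) (ℓ : ℕ) :
    ∀ (N : ℕ) (q : W) (b : ℕ → Bool),
    (∀ j < N, ((List.range ℓ).map fun t => b (j * ℓ + t)) ∈ bad (traj σ q b (j * ℓ))) →
    ((List.range (N * ℓ)).map b) ∈ allBad σ bad N q
  | 0, q, b => by simp [allBad]
  | N + 1, q, b => by
    intro h
    have h0 : ((List.range ℓ).map b) ∈ bad q := by
      have := h 0 (Nat.succ_pos N)
      simpa [traj] using this
    set b' : ℕ → Bool := fun t => b (ℓ + t) with hb'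
    have key : ∀ j, traj σ q b (ℓ + j * ℓ) = traj σ (run σ q ((List.range ℓ).map b)) b' (j * ℓ) := by
      intro j
      rw [traj_eq_run σ _ b' (j * ℓ), traj_add σ q b ℓ (j * ℓ), traj_eq_run σ q b ℓ]
    have hrec := mem_allBad σ bad ℓ N (run σ q ((List.range ℓ).map b)) b' ?_
    · have split : (List.range ((N+1) * ℓ)).map b
          = ((List.range ℓ).map b) ++ ((List.range (N * ℓ)).map b') := by
        have : (N + 1) * ℓ = ℓ + N * ℓ := by ring
        rw [this, List.range_add, List.map_append, List.map_map]
        rfl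
      rw [split]
      exact Finset.mem_biUnion.2 ⟨_, h0, Finset.mem_image.2 ⟨_, hrec, rfl⟩⟩
    · intro j hj
      rw [← key j]
      have harg : ((List.range ℓ).map fun t => b' (j * ℓ + t))
          = ((List.range ℓ).map fun t => b ((j+1) * ℓ + t)) := by
        refine List.map_congr_left fun t _ => ?_
        show b (ℓ + (j * ℓ + t)) = b ((j+1) * ℓ + t)
        congr 1; ring
      have hidx : ℓ + j * ℓ = (j + 1) * ℓ := by ring
      rw [harg, hidx]
      exact h (j + 1) (by omega)

lemma meas_le {μ : Measure (ℕ → Bool)} (hμ : IsUniformBernoulli μ)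
    (S : Finset (List Bool)) (n : ℕ) (hS : ∀ v ∈ S, v.length = n)
    (A : Set (ℕ → Bool)) (hA : ∀ b ∈ A, ((List.range n).map b) ∈ S) :
    μ A ≤ S.card * (2 : ENNReal)⁻¹ ^ n := by
  have hsub : A ⊆ ⋃ v ∈ S, cylinder v := by
    intro b hb
    refine Set.mem_biUnion (hA b hb) ?_
    intro i
    simp [List.get_eq_getElem]
  calc μ A ≤ μ (⋃ v ∈ S, cylinder v) := measure_mono hsub
    _ ≤ ∑ v ∈ S, μ (cylinder v) := measure_biUnion_finset_le _ _
    _ = ∑ v ∈ S, (2 : ENNReal)⁻¹ ^ n := by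
        refine Finset.sum_congr rfl fun v hv => ?_
        rw [hμ.2 v, hS v hv]
    _ = S.card * (2 : ENNReal)⁻¹ ^ n := by
        rw [Finset.sum_const, nsmul_eq_mul]

set_option linter.unusedSectionVars false

variable [Fintype W] [DecidableEq W] [Nonempty W]

lemma exists_run_eq (σ : W → W × W)
    (hsc : ∀ q q' : W, Relation.ReflTransGen (fun x y => y = (σ x).1 ∨ y = (σ x).2) q q')
    (q q' : W) : ∃ u : List Bool, run σ q u = q' := by
  induction hsc q q' with
  | refl => exact ⟨[], rfl⟩
  | tail h₁ h₂ ih =>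
    rcases ih with ⟨u, hu⟩
    rcases h₂ with h | h
    · exact ⟨u ++ [false], by rw [run_append, hu]; simp [run, h]⟩
    · exact ⟨u ++ [true], by rw [run_append, hu]; simp [run, h]⟩

lemma cover_list (σ : W → W × W)
    (hsc : ∀ q q' : W, Relation.ReflTransGen (fun x y => y = (σ x).1 ∨ y = (σ x).2) q q') :
    ∀ (l : List W) (p : W), ∃ u : List Bool,
      ∀ w ∈ l, ∃ i, i ≤ u.length ∧ run σ p (u.take i) = w
  | [], p => ⟨[], by simp⟩
  | w :: l, p => by
    rcases exists_run_eq σ hsc p w with ⟨u₁, hu₁⟩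
    rcases cover_list σ hsc l (run σ p u₁) with ⟨u', hu'⟩
    refine ⟨u₁ ++ u', ?_⟩
    intro x hx
    rcases List.mem_cons.1 hx with rfl | hx
    · exact ⟨u₁.length, by simp, by rw [List.take_append_of_le_length le_rfl, List.take_length, hu₁]⟩
    · rcases hu' x hx with ⟨i, hi, hrun⟩
      refine ⟨u₁.length + i, by simp; omega, ?_⟩
      rw [List.take_length_add_append, run_append, hrun]

variable [Fintype W] [DecidableEq W] [Nonempty W]

/-- There is a uniform length `L ≥ 1` such that from every state there is a word of length `L`
covering every state at some time `i` with `1 ≤ i ≤ L`. -/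
lemma exists_cover (σ : W → W × W)
    (hsc : ∀ q q' : W, Relation.ReflTransGen (fun x y => y = (σ x).1 ∨ y = (σ x).2) q q') :
    ∃ L : ℕ, ∀ q : W, ∃ u : List Bool, u.length = L ∧
      ∀ w : W, ∃ i, 1 ≤ i ∧ i ≤ L ∧ run σ q (u.take i) = w := by
  have hc : ∀ p : W, ∃ u : List Bool,
      ∀ w : W, ∃ i, i ≤ u.length ∧ run σ p (u.take i) = w := by
    intro p
    rcases cover_list σ hsc Finset.univ.toList p with ⟨u, hu⟩
    exact ⟨u, fun w => hu w (by simp)⟩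
  choose c hc using hc
  set L : ℕ := (Finset.univ.sup fun q : W => (c ((σ q).1)).length) + 1 with hL
  refine ⟨L, fun q => ?_⟩
  have hlen : (c ((σ q).1)).length + 1 ≤ L := by
    have h2 := Finset.le_sup (f := fun q : W => (c ((σ q).1)).length) (Finset.mem_univ q)
    omega
  refine ⟨false :: (c ((σ q).1)) ++ List.replicate (L - ((c ((σ q).1)).length + 1)) false,
    by simp; omega, ?_⟩
  intro w
  rcases hc ((σ q).1) w with ⟨i, hi, hrun⟩
  refine ⟨i + 1, by omega, by omega, ?_⟩
  have ht : ((false :: c ((σ q).1)) ++ List.replicate (L - ((c ((σ q).1)).length + 1)) false).take (i+1)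
      = false :: (c ((σ q).1)).take i := by
    rw [List.take_append_of_le_length (by simp; omega)]
    rfl
  rw [List.cons_append] at ht ⊢
  rw [ht]
  simpa [run] using hrun

/-- m-fold covering words. -/
lemma exists_cover_pow (σ : W → W × W) (L : ℕ)
    (hL : ∀ q : W, ∃ u : List Bool, u.length = L ∧
      ∀ w : W, ∃ i, 1 ≤ i ∧ i ≤ L ∧ run σ q (u.take i) = w) :
    ∀ (m : ℕ) (q : W), ∃ u : List Bool, u.length = m * L ∧
      ∀ w : W, m ≤ ((Finset.Icc 1 (m * L)).filter fun i => run σ q (u.take i) = w).card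
  | 0, q => ⟨[], by simp⟩
  | m + 1, q => by
    rcases hL q with ⟨u₁, hu₁len, hu₁⟩
    rcases exists_cover_pow σ L hL m (run σ q u₁) with ⟨u', hu'len, hu'⟩
    refine ⟨u₁ ++ u', by simp [hu₁len, hu'len]; ring, ?_⟩
    intro w
    rcases hu₁ w with ⟨i₁, hi₁1, hi₁L, hrun₁⟩
    set S' := (Finset.Icc 1 (m * L)).filter fun i => run σ (run σ q u₁) (u'.take i) = w with hS'
    set F := (Finset.Icc 1 ((m+1) * L)).filter fun i => run σ q ((u₁ ++ u').take i) = w with hF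
    have hsub : insert i₁ (S'.image (· + L)) ⊆ F := by
      intro j hj
      rcases Finset.mem_insert.1 hj with rfl | hj
      · refine Finset.mem_filter.2 ⟨Finset.mem_Icc.2 ⟨hi₁1, by nlinarith⟩, ?_⟩
        rw [List.take_append_of_le_length (by omega)]
        exact hrun₁
      · rcases Finset.mem_image.1 hj with ⟨i, hi, rfl⟩
        rcases Finset.mem_filter.1 hi with ⟨hmem, hrun⟩
        rcases Finset.mem_Icc.1 hmem with ⟨h1, h2⟩
        refine Finset.mem_filter.2 ⟨Finset.mem_Icc.2 ⟨by omega, by nlinarith⟩, ?_⟩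
        have : i + L = u₁.length + i := by omega
        rw [this, List.take_length_add_append, run_append, hrun]
    have hnot : i₁ ∉ S'.image (· + L) := by
      intro h
      rcases Finset.mem_image.1 h with ⟨i, hi, hii⟩
      rcases Finset.mem_Icc.1 (Finset.mem_filter.1 hi).1 with ⟨h1, _⟩
      omega
    calc m + 1 ≤ (insert i₁ (S'.image (· + L))).card := by
          rw [Finset.card_insert_of_notMem hnot,
            Finset.card_image_of_injective _ (add_left_injective L)]
          have := hu' w
          rw [← hS'] at this
          omega
      _ ≤ F.card := Finset.card_le_card hsub

lemma level {μ : Measure (ℕ → Bool)} (hμ : IsUniformBernoulli μ) (σ : W → W × W) (L : ℕ)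
    (hL : ∀ q : W, ∃ u : List Bool, u.length = L ∧
      ∀ w : W, ∃ i, 1 ≤ i ∧ i ≤ L ∧ run σ q (u.take i) = w) (m : ℕ) :
    ∃ T : ℕ, ∀ q : W, ∀ T' : ℕ, T ≤ T' →
      μ {b | ¬ ∀ w : W, m ≤ ((Finset.range (T' + 1)).filter fun i => traj σ q b i = w).card}
        ≤ (2 : ENNReal)⁻¹ ^ (m + 2) := by
  classical
  set ℓ := m * L with hℓ
  set Pm : W → List Bool → Prop := fun p u =>
    ∀ w : W, m ≤ ((Finset.Icc 1 ℓ).filter fun i => run σ p (u.take i) = w).card with hPm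
  set bad : W → Finset (List Bool) := fun p => (enum ℓ).filter fun u => ¬ Pm p u with hbad
  have hbadlen : ∀ p u, u ∈ bad p → u.length = ℓ := fun p u hu =>
    length_of_mem_enum (Finset.mem_filter.1 hu).1
  have hbadcard : ∀ p, (bad p).card ≤ 2 ^ ℓ - 1 := by
    intro p
    rcases exists_cover_pow σ L hL m p with ⟨u₀, hlen, hu₀⟩
    have hmem : u₀ ∈ enum ℓ := mem_enum hlen
    have hnot : u₀ ∉ bad p := by
      simp only [hbad, Finset.mem_filter, not_and, not_not]
      intro _
      exact hu₀
    have hlt : (bad p).card < (enum ℓ).card :=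
      Finset.card_lt_card ((Finset.ssubset_iff_of_subset (Finset.filter_subset _ _)).2
        ⟨u₀, hmem, hnot⟩)
    rw [card_enum] at hlt
    omega
  set r : ENNReal := ((2 ^ ℓ - 1 : ℕ) : ENNReal) * (2 : ENNReal)⁻¹ ^ ℓ with hr
  have hrlt : r < 1 := by
    rw [hr, ← ENNReal.inv_pow, ← div_eq_mul_inv,
      ENNReal.div_lt_iff (Or.inl (by positivity)) (Or.inl (by simp))]
    rw [one_mul]
    have : ((2 ^ ℓ : ℕ) : ENNReal) = (2 : ENNReal) ^ ℓ := by push_cast; ring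
    rw [← this, Nat.cast_lt]
    have : 0 < 2 ^ ℓ := Nat.pow_pos (by norm_num)
    omega
  have hpos : (0 : ENNReal) < (2 : ENNReal)⁻¹ ^ (m + 2) := by
    apply ENNReal.pow_pos
    simp [ENNReal.inv_pos]
  obtain ⟨N, hN⟩ := ((ENNReal.tendsto_pow_atTop_nhds_zero_of_lt_one hrlt).eventually_lt_const
    hpos).exists
  refine ⟨N * ℓ, fun q T' hT' => ?_⟩
  set A := {b : ℕ → Bool | ¬ ∀ w : W,
    m ≤ ((Finset.range (T' + 1)).filter fun i => traj σ q b i = w).card} with hA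
  set A0 := {b : ℕ → Bool | ¬ ∀ w : W,
    m ≤ ((Finset.range (N * ℓ + 1)).filter fun i => traj σ q b i = w).card} with hA0
  have hsub : A ⊆ A0 := by
    intro b hb
    simp only [hA, Set.mem_setOf_eq] at hb
    simp only [hA0, Set.mem_setOf_eq]
    intro hcon
    apply hb
    intro w
    refine (hcon w).trans (Finset.card_le_card ?_)
    exact Finset.monotone_filter_left _ (Finset.range_subset_range.2 (by omega))
  have hmain : ∀ b ∈ A0, ((List.range (N * ℓ)).map b) ∈ allBad σ bad N q := by
    intro b hb
    apply mem_allBad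
    intro j hj
    set f : ℕ → Bool := fun t => b (j * ℓ + t) with hf
    have hemem : (List.range ℓ).map f ∈ enum ℓ := mem_enum (by simp)
    refine Finset.mem_filter.2 ⟨hemem, ?_⟩
    intro hPmholds
    simp only [hA0, Set.mem_setOf_eq] at hb
    apply hb
    intro w
    have hloc := hPmholds w
    set Sloc := (Finset.Icc 1 ℓ).filter
      (fun i => run σ (traj σ q b (j * ℓ)) (((List.range ℓ).map f).take i) = w) with hSloc
    have himg : Sloc.image (fun i => j * ℓ + i) ⊆
        (Finset.range (N * ℓ + 1)).filter fun i => traj σ q b i = w := by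
      intro x hx
      rcases Finset.mem_image.1 hx with ⟨i, hi, rfl⟩
      rcases Finset.mem_filter.1 hi with ⟨hiIcc, hirun⟩
      rcases Finset.mem_Icc.1 hiIcc with ⟨hi1, hi2⟩
      refine Finset.mem_filter.2 ⟨Finset.mem_range.2 (by nlinarith), ?_⟩
      rw [traj_add σ q b (j * ℓ) i]
      have htk : ((List.range ℓ).map f).take i = (List.range i).map f := by
        rw [← List.map_take, List.take_range, Nat.min_eq_left hi2]
      rw [← htk]
      exact hirun
    calc m ≤ Sloc.card := hloc
      _ = (Sloc.image (fun i => j * ℓ + i)).card :=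
          (Finset.card_image_of_injective _ (add_right_injective (j * ℓ))).symm
      _ ≤ _ := Finset.card_le_card himg
  have hlenS : ∀ v ∈ allBad σ bad N q, v.length = N * ℓ :=
    fun v hv => length_allBad σ bad ℓ hbadlen N q v hv
  calc μ A ≤ μ A0 := measure_mono hsub
    _ ≤ (allBad σ bad N q).card * (2 : ENNReal)⁻¹ ^ (N * ℓ) :=
        meas_le hμ _ _ hlenS _ hmain
    _ ≤ ((2 ^ ℓ - 1 : ℕ) ^ N : ℕ) * (2 : ENNReal)⁻¹ ^ (N * ℓ) := by
        gcongr
        exact_mod_cast Nat.cast_le.2 (card_allBad σ bad _ hbadcard N q)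
    _ = r ^ N := by
        rw [hr, mul_pow, Nat.cast_pow]
        congr 1
        rw [← pow_mul, Nat.mul_comm]
    _ ≤ (2 : ENNReal)⁻¹ ^ (m + 2) := le_of_lt hN

end Stmt8

/-- For a strongly connected Markov chain `M_σ` on a finite set `W`, there is a
nondecreasing sequence `n_k → ∞` such that from every state, with probability at
least `1/2`, for every `k` every state has been visited at least `n_k` times among
the first `k+1` steps. -/
theorem stmt_8 {W : Type} [Fintype W] [Nonempty W] [DecidableEq W]
    (μ : Measure (ℕ → Bool)) (hμ : IsUniformBernoulli μ)
    (σ : W → W × W)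
    (hsc : ∀ q q' : W,
      Relation.ReflTransGen (fun x y => y = (σ x).1 ∨ y = (σ x).2) q q') :
    ∃ nk : ℕ → ℕ, Monotone nk ∧ Filter.Tendsto nk Filter.atTop Filter.atTop ∧
      ∀ q : W, (2 : ENNReal)⁻¹ ≤
        μ {b | ∀ k : ℕ, ∀ w : W,
          nk k ≤ ((Finset.range (k + 1)).filter fun i => traj σ q b i = w).card} := by
  classical
  obtain ⟨L, hL⟩ := Stmt8.exists_cover σ hsc
  choose T0 hT0 using fun m => Stmt8.level hμ σ L hL m
  set T : ℕ → ℕ := fun m => m + ∑ j ∈ Finset.range (m + 1), T0 j with hT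
  have hTmono : Monotone T := by
    intro a b hab
    exact Nat.add_le_add hab (Finset.sum_le_sum_of_subset
      (Finset.range_subset_range.2 (by omega)))
  have hTge : ∀ m, m ≤ T m := fun m => Nat.le_add_right _ _
  have hTge0 : ∀ m, T0 m ≤ T m := by
    intro m
    have h1 : T0 m ≤ ∑ j ∈ Finset.range (m + 1), T0 j :=
      Finset.single_le_sum (f := T0) (fun i _ => Nat.zero_le _) (Finset.self_mem_range_succ m)
    simp only [hT]
    omega
  set nk : ℕ → ℕ := fun k => ((Finset.range (k + 1)).filter fun m => T (m + 1) ≤ k).card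
    with hnk
  have hmono : Monotone nk := by
    intro a b hab
    apply Finset.card_le_card
    intro m hm
    rcases Finset.mem_filter.1 hm with ⟨hm1, hm2⟩
    rcases Finset.mem_range.1 hm1 with hm1
    exact Finset.mem_filter.2 ⟨Finset.mem_range.2 (by omega), by omega⟩
  refine ⟨nk, hmono, ?_, ?_⟩
  · refine Filter.tendsto_atTop_atTop_of_monotone hmono fun M => ⟨T M, ?_⟩
    have hsub : Finset.range M ⊆ (Finset.range (T M + 1)).filter fun m => T (m + 1) ≤ T M := by
      intro m hm
      rcases Finset.mem_range.1 hm with hm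
      have h1 : M ≤ T M := hTge M
      refine Finset.mem_filter.2 ⟨Finset.mem_range.2 (by omega), hTmono (by omega)⟩
    calc M = (Finset.range M).card := (Finset.card_range M).symm
      _ ≤ _ := Finset.card_le_card hsub
  · intro q
    set E := {b : ℕ → Bool | ∀ k : ℕ, ∀ w : W,
      nk k ≤ ((Finset.range (k + 1)).filter fun i => traj σ q b i = w).card} with hE
    set F : ℕ → Set (ℕ → Bool) := fun m => {b | ¬ ∀ w : W,
      m + 1 ≤ ((Finset.range (T (m + 1) + 1)).filter fun i => traj σ q b i = w).card} with hF
    have hEc : Eᶜ ⊆ ⋃ m, F m := by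
      intro b hb
      by_contra hcon
      simp only [Set.mem_iUnion, not_exists] at hcon
      apply hb
      intro k w
      have hsub : ((Finset.range (k + 1)).filter fun m => T (m + 1) ≤ k) ⊆
          Finset.range (((Finset.range (k + 1)).filter fun i => traj σ q b i = w).card) := by
        intro m hm
        rcases Finset.mem_filter.1 hm with ⟨_, hm2⟩
        have hbF : ∀ w : W,
            m + 1 ≤ ((Finset.range (T (m + 1) + 1)).filter fun i => traj σ q b i = w).card := by
          have := hcon m
          simp only [hF, Set.mem_setOf_eq, not_not] at this
          exact this
        have hcount : m + 1 ≤ ((Finset.range (k + 1)).filter fun i => traj σ q b i = w).card :=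
          (hbF w).trans (Finset.card_le_card
            (Finset.monotone_filter_left _ (Finset.range_subset_range.2 (by omega))))
        exact Finset.mem_range.2 (by omega)
      calc nk k ≤ (Finset.range
            (((Finset.range (k + 1)).filter fun i => traj σ q b i = w).card)).card :=
          Finset.card_le_card hsub
        _ = _ := Finset.card_range _
    have hμF : ∀ m : ℕ, μ (F m) ≤ (2 : ENNReal)⁻¹ ^ (m + 3) := by
      intro m
      exact hT0 (m + 1) q (T (m + 1)) (hTge0 (m + 1))
    have hsum : ∑' m : ℕ, (2 : ENNReal)⁻¹ ^ (m + 3) ≤ 2⁻¹ := by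
      calc ∑' m : ℕ, (2 : ENNReal)⁻¹ ^ (m + 3) = ∑' m : ℕ, 2⁻¹ ^ m * 2⁻¹ ^ 3 := by
            simp only [pow_add]
        _ = (∑' m : ℕ, (2 : ENNReal)⁻¹ ^ m) * 2⁻¹ ^ 3 := ENNReal.tsum_mul_right
        _ = 2 * 2⁻¹ ^ 3 := by
            rw [ENNReal.tsum_geometric, ENNReal.one_sub_inv_two, inv_inv]
        _ = 2⁻¹ ^ 2 := by
            rw [pow_succ', ← mul_assoc, ENNReal.mul_inv_cancel (by norm_num) (by norm_num),
              one_mul]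
        _ ≤ 2⁻¹ := by
            rw [sq]
            calc (2 : ENNReal)⁻¹ * 2⁻¹ ≤ 1 * 2⁻¹ :=
                mul_le_mul_left (ENNReal.inv_le_one.2 one_le_two) _
              _ = 2⁻¹ := one_mul _
    have hEcle : μ Eᶜ ≤ 2⁻¹ :=
      calc μ Eᶜ ≤ μ (⋃ m, F m) := measure_mono hEc
        _ ≤ ∑' m : ℕ, μ (F m) := measure_iUnion_le F
        _ ≤ ∑' m : ℕ, (2 : ENNReal)⁻¹ ^ (m + 3) := ENNReal.tsum_le_tsum hμF
        _ ≤ 2⁻¹ := hsum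
    haveI := hμ.1
    have h1 : (1 : ENNReal) ≤ μ E + 2⁻¹ := by
      have h2 := measure_union_le (μ := μ) E Eᶜ
      rw [Set.union_compl_self] at h2
      calc (1 : ENNReal) = μ Set.univ := (measure_univ (μ := μ)).symm
        _ ≤ μ E + μ Eᶜ := h2
        _ ≤ μ E + 2⁻¹ := add_le_add_right hEcle _
    have h3 : (2 : ENNReal)⁻¹ + 2⁻¹ ≤ μ E + 2⁻¹ := by
      rw [ENNReal.inv_two_add_inv_two]
      exact h1
    exact (ENNReal.add_le_add_iff_right (by norm_num)).1 h3
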